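/- Let p be a prime number and let s ∈ ℂ with Re(s) > -1. Then ∫_{ℤ_p} |x|_p^s dμ(x) = (1 - p^{-1})/(1 - p^{-1-s}). -/

import Mathlib

open MeasureTheory Complex

namespace PadicZetaAux

variable {p : ℕ} [hp : Fact p.Prime]

lemma one_lt_p : (1:ℝ) < p := by exact_mod_cast hp.out.one_lt
lemma p_pos : (0:ℝ) < p := lt_trans one_pos one_lt_p

/-- Closed ball of radius `p^(-n)` in `ℚ_[p]`. -/
def B (p : ℕ) [Fact p.Prime] (n : ℕ) : Set ℚ_[p] := {x | ‖x‖ ≤ (p:ℝ) ^ (-(n:ℤ))}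

/-- Sphere of radius `p^(-n)` in `ℚ_[p]`. -/
def S (p : ℕ) [Fact p.Prime] (n : ℕ) : Set ℚ_[p] := {x | ‖x‖ = (p:ℝ) ^ (-(n:ℤ))}

lemma isClosed_B (n : ℕ) : IsClosed (B p n) := isClosed_le continuous_norm continuous_const
lemma isClosed_S (n : ℕ) : IsClosed (S p n) := isClosed_eq continuous_norm continuous_const

/-- The translate map defining a coset of `B p (n+1)` inside `B p n`. -/
def T (p : ℕ) [Fact p.Prime] (n : ℕ) (j : ℕ) : Set ℚ_[p] :=
  (fun x => -((j:ℚ_[p]) * (p:ℚ_[p])^n) + x) ⁻¹' B p (n+1)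

lemma pow_le_B (n : ℕ) : (p:ℝ) ^ (-(n+1:ℕ):ℤ) ≤ (p:ℝ) ^ (-(n:ℕ):ℤ) := by
  rw [zpow_le_zpow_iff_right₀ one_lt_p]
  omega

lemma B_cover (n : ℕ) : B p n = ⋃ j ∈ Finset.range p, T p n j := by
  ext x
  simp only [Set.mem_iUnion, T, Set.mem_preimage, B, Set.mem_setOf_eq, Finset.mem_range,
    exists_prop]
  constructor
  · intro hx
    have hpn : ((p:ℚ_[p])^n) ≠ 0 := pow_ne_zero _ (NeZero.ne _)
    have hnorm : ‖x * ((p:ℚ_[p])^n)⁻¹‖ ≤ 1 := by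
      rw [norm_mul, norm_inv, Padic.norm_p_pow]
      calc ‖x‖ * ((p:ℝ) ^ (-(n:ℕ):ℤ))⁻¹ ≤ (p:ℝ) ^ (-(n:ℕ):ℤ) * ((p:ℝ) ^ (-(n:ℕ):ℤ))⁻¹ :=
            mul_le_mul_of_nonneg_right hx (by positivity)
        _ = 1 := mul_inv_cancel₀ (zpow_ne_zero _ (ne_of_gt p_pos))
    set a : ℤ_[p] := ⟨x * ((p:ℚ_[p])^n)⁻¹, hnorm⟩ with ha
    refine ⟨a.appr 1, by simpa using a.appr_lt 1, ?_⟩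
    have hspec := PadicInt.appr_spec 1 a
    rw [Ideal.mem_span_singleton] at hspec
    obtain ⟨z, hz⟩ := hspec
    have hsub : ‖((a - (a.appr 1 : ℤ_[p]) : ℤ_[p]) : ℚ_[p])‖ ≤ (p:ℝ)⁻¹ := by
      show ‖(a - (a.appr 1 : ℤ_[p]) : ℤ_[p])‖ ≤ (p:ℝ)⁻¹
      rw [hz, norm_mul, pow_one, PadicInt.norm_p]
      calc (p:ℝ)⁻¹ * ‖z‖ ≤ (p:ℝ)⁻¹ * 1 :=
            mul_le_mul_of_nonneg_left z.norm_le_one (by positivity)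
        _ = (p:ℝ)⁻¹ := mul_one _
    have heq : -(((a.appr 1 : ℕ):ℚ_[p]) * (p:ℚ_[p])^n) + x
        = ((a - (a.appr 1 : ℤ_[p]) : ℤ_[p]) : ℚ_[p]) * (p:ℚ_[p])^n := by
      have a_coe : (a:ℚ_[p]) = x * ((p:ℚ_[p])^n)⁻¹ := rfl
      rw [PadicInt.coe_sub, a_coe, PadicInt.coe_natCast]
      push_cast [ha]
      field_simp
      ring
    rw [heq, norm_mul, Padic.norm_p_pow]
    calc ‖((a - (a.appr 1 : ℤ_[p]) : ℤ_[p]) : ℚ_[p])‖ * (p:ℝ) ^ (-(n:ℕ):ℤ)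
        ≤ (p:ℝ)⁻¹ * (p:ℝ) ^ (-(n:ℕ):ℤ) := mul_le_mul_of_nonneg_right hsub (by positivity)
      _ = (p:ℝ) ^ (-(n+1:ℕ):ℤ) := by
          rw [← zpow_neg_one, ← zpow_add₀ (ne_of_gt p_pos)]
          congr 1
          omega
  · rintro ⟨j, _, hxj⟩
    have hc : ‖(j:ℚ_[p]) * (p:ℚ_[p])^n‖ ≤ (p:ℝ) ^ (-(n:ℕ):ℤ) := by
      rw [norm_mul, Padic.norm_p_pow]
      have hj1 : ‖((j:ℕ):ℚ_[p])‖ ≤ 1 := by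
        have := Padic.norm_int_le_one (p := p) (j : ℤ)
        simpa using this
      calc ‖((j:ℕ):ℚ_[p])‖ * (p:ℝ) ^ (-(n:ℕ):ℤ)
          ≤ 1 * (p:ℝ) ^ (-(n:ℕ):ℤ) := mul_le_mul_of_nonneg_right hj1 (by positivity)
        _ = (p:ℝ) ^ (-(n:ℕ):ℤ) := one_mul _
    have : x = (-((j:ℚ_[p]) * (p:ℚ_[p])^n) + x) + (j:ℚ_[p]) * (p:ℚ_[p])^n := by ring
    rw [this]
    calc ‖(-((j:ℚ_[p]) * (p:ℚ_[p])^n) + x) + (j:ℚ_[p]) * (p:ℚ_[p])^n‖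
        ≤ max ‖-((j:ℚ_[p]) * (p:ℚ_[p])^n) + x‖ ‖(j:ℚ_[p]) * (p:ℚ_[p])^n‖ :=
          Padic.nonarchimedean _ _
      _ ≤ (p:ℝ) ^ (-(n:ℕ):ℤ) := max_le (le_trans hxj (pow_le_B n)) hc

lemma T_disjoint (n : ℕ) : Set.Pairwise ↑(Finset.range p)
    (Function.onFun Disjoint fun j => T p n j) := by
  intro i hi j hj hij
  simp only [Finset.coe_range, Set.mem_Iio] at hi hj
  rw [Function.onFun, Set.disjoint_left]
  intro x hxi hxj
  simp only [T, Set.mem_preimage, B, Set.mem_setOf_eq] at hxi hxj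
  have hdiff : ‖(i:ℚ_[p]) * (p:ℚ_[p])^n - (j:ℚ_[p]) * (p:ℚ_[p])^n‖ ≤ (p:ℝ) ^ (-(n+1:ℕ):ℤ) := by
    have : (i:ℚ_[p]) * (p:ℚ_[p])^n - (j:ℚ_[p]) * (p:ℚ_[p])^n
        = (-((j:ℚ_[p]) * (p:ℚ_[p])^n) + x) + -(-((i:ℚ_[p]) * (p:ℚ_[p])^n) + x) := by ring
    rw [this]
    calc ‖(-((j:ℚ_[p]) * (p:ℚ_[p])^n) + x) + -(-((i:ℚ_[p]) * (p:ℚ_[p])^n) + x)‖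
        ≤ max ‖-((j:ℚ_[p]) * (p:ℚ_[p])^n) + x‖ ‖-(-((i:ℚ_[p]) * (p:ℚ_[p])^n) + x)‖ :=
          Padic.nonarchimedean _ _
      _ ≤ (p:ℝ) ^ (-(n+1:ℕ):ℤ) := by
          rw [norm_neg]
          exact max_le hxj hxi
  have hfac : (i:ℚ_[p]) * (p:ℚ_[p])^n - (j:ℚ_[p]) * (p:ℚ_[p])^n
      = (((i:ℤ) - (j:ℤ) : ℤ):ℚ_[p]) * (p:ℚ_[p])^n := by push_cast; ring
  rw [hfac, norm_mul, Padic.norm_p_pow] at hdiff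
  have hnd : ¬ ((p:ℤ) ∣ ((i:ℤ) - (j:ℤ))) := by
    intro hdvd
    have h0 : ((i:ℤ) - (j:ℤ)) = 0 := by
      refine Int.eq_zero_of_dvd_of_natAbs_lt_natAbs hdvd ?_
      simp only [Int.natAbs_natCast]
      omega
    omega
  have h1 : (1:ℝ) ≤ ‖(((i:ℤ) - (j:ℤ) : ℤ):ℚ_[p])‖ := by
    by_contra h
    push_neg at h
    exact hnd ((Padic.norm_intCast_lt_one_iff).mp h)
  have : (p:ℝ) ^ (-(n:ℕ):ℤ) ≤ (p:ℝ) ^ (-(n+1:ℕ):ℤ) := by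
    calc (p:ℝ) ^ (-(n:ℕ):ℤ) = 1 * (p:ℝ) ^ (-(n:ℕ):ℤ) := (one_mul _).symm
      _ ≤ ‖(((i:ℤ) - (j:ℤ) : ℤ):ℚ_[p])‖ * (p:ℝ) ^ (-(n:ℕ):ℤ) := by gcongr
      _ ≤ (p:ℝ) ^ (-(n+1:ℕ):ℤ) := hdiff
  have h2 : ((-(n+1:ℕ):ℤ)) < (-(n:ℕ):ℤ) := by omega
  exact absurd this (not_le.mpr ((zpow_lt_zpow_iff_right₀ one_lt_p).mpr h2))


open scoped ENNReal

variable [MeasurableSpace ℚ_[p]] [BorelSpace ℚ_[p]]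

lemma measurableSet_B (n : ℕ) : MeasurableSet (B p n) := (isClosed_B n).measurableSet
lemma measurableSet_S (n : ℕ) : MeasurableSet (S p n) := (isClosed_S n).measurableSet

lemma measure_B (μ : Measure ℚ_[p]) [μ.IsAddHaarMeasure]
    (hμ : μ {x : ℚ_[p] | ‖x‖ ≤ 1} = 1) (n : ℕ) :
    μ (B p n) = ((p:ℝ≥0∞))⁻¹ ^ n := by
  have hp0 : (p:ℝ≥0∞) ≠ 0 := by
    simp [hp.out.ne_zero]
  have hpt : (p:ℝ≥0∞) ≠ ⊤ := by simp
  induction n with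
  | zero => simpa [B] using hμ
  | succ n ih =>
    have hmeas : ∀ j ∈ Finset.range p, MeasurableSet (T p n j) := fun j _ =>
      (measurableSet_B (n+1)).preimage (measurable_const_add _)
    have hsum : μ (B p n) = ∑ j ∈ Finset.range p, μ (T p n j) := by
      rw [B_cover n]
      exact measure_biUnion_finset (T_disjoint n) hmeas
    have hTj : ∀ j, μ (T p n j) = μ (B p (n+1)) := fun j =>
      measure_preimage_add μ _ _
    rw [ih] at hsum
    simp only [hTj, Finset.sum_const, Finset.card_range, nsmul_eq_mul] at hsum
    have : μ (B p (n+1)) = (p:ℝ≥0∞)⁻¹ * ((p:ℝ≥0∞) * μ (B p (n+1))) := by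
      rw [← mul_assoc, ENNReal.inv_mul_cancel hp0 hpt, one_mul]
    rw [this, ← hsum, pow_succ, mul_comm]

omit [MeasurableSpace ℚ_[p]] [BorelSpace ℚ_[p]] in
lemma S_eq (n : ℕ) : S p n = B p n \ B p (n+1) := by
  ext x
  simp only [S, B, Set.mem_setOf_eq, Set.mem_diff, not_le]
  constructor
  · intro h
    refine ⟨le_of_eq h, ?_⟩
    rw [h, zpow_lt_zpow_iff_right₀ one_lt_p]
    omega
  · rintro ⟨h1, h2⟩
    have hx0 : x ≠ 0 := by
      intro h
      rw [h, norm_zero] at h2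
      exact absurd h2 (not_lt.mpr (by positivity))
    rw [Padic.norm_eq_zpow_neg_valuation hx0] at h1 h2 ⊢
    rw [zpow_le_zpow_iff_right₀ one_lt_p] at h1
    rw [zpow_lt_zpow_iff_right₀ one_lt_p] at h2
    congr 1
    omega

lemma measure_S (μ : Measure ℚ_[p]) [μ.IsAddHaarMeasure]
    (hμ : μ {x : ℚ_[p] | ‖x‖ ≤ 1} = 1) (n : ℕ) :
    μ (S p n) = (p:ℝ≥0∞)⁻¹ ^ n - (p:ℝ≥0∞)⁻¹ ^ (n+1) := by
  have hsub : B p (n+1) ⊆ B p n := fun x hx => le_trans hx (pow_le_B n)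
  rw [S_eq, measure_diff hsub (measurableSet_B (n+1)).nullMeasurableSet ?_,
    measure_B μ hμ, measure_B μ hμ]
  rw [measure_B μ hμ]
  exact ENNReal.pow_ne_top (ENNReal.inv_ne_top.mpr (by simp [hp.out.ne_zero]))

lemma measure_S_ne_top (μ : Measure ℚ_[p]) [μ.IsAddHaarMeasure]
    (hμ : μ {x : ℚ_[p] | ‖x‖ ≤ 1} = 1) (n : ℕ) : μ (S p n) ≠ ⊤ := by
  rw [measure_S μ hμ]
  exact ne_top_of_le_ne_top (ENNReal.pow_ne_top (ENNReal.inv_ne_top.mpr (by simp [hp.out.ne_zero])))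
    tsub_le_self

lemma measure_S_toReal (μ : Measure ℚ_[p]) [μ.IsAddHaarMeasure]
    (hμ : μ {x : ℚ_[p] | ‖x‖ ≤ 1} = 1) (n : ℕ) :
    (μ (S p n)).toReal = (p:ℝ)⁻¹ ^ n * (1 - (p:ℝ)⁻¹) := by
  have hinv : ((p:ℝ≥0∞)⁻¹ ^ (n+1)) ≤ (p:ℝ≥0∞)⁻¹ ^ n := by
    rw [pow_succ]
    calc (p:ℝ≥0∞)⁻¹ ^ n * (p:ℝ≥0∞)⁻¹ ≤ (p:ℝ≥0∞)⁻¹ ^ n * 1 := by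
          gcongr
          exact ENNReal.inv_le_one.mpr
            (by exact_mod_cast Nat.one_le_iff_ne_zero.mpr hp.out.ne_zero)
      _ = (p:ℝ≥0∞)⁻¹ ^ n := mul_one _
  have hnt : ∀ m : ℕ, ((p:ℝ≥0∞)⁻¹ ^ m) ≠ ⊤ :=
    fun m => ENNReal.pow_ne_top (ENNReal.inv_ne_top.mpr (by simp [hp.out.ne_zero]))
  rw [measure_S μ hμ, ENNReal.toReal_sub_of_le hinv (hnt n)]
  have hcast : ∀ m : ℕ, ((p:ℝ≥0∞)⁻¹ ^ m).toReal = (p:ℝ)⁻¹ ^ m := by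
    intro m
    rw [ENNReal.toReal_pow, ENNReal.toReal_inv]
    simp
  rw [hcast, hcast, pow_succ]
  ring


omit [MeasurableSpace ℚ_[p]] [BorelSpace ℚ_[p]] in
lemma term_eq (s : ℂ) (n : ℕ) :
    (((p:ℝ)⁻¹ ^ n * (1 - (p:ℝ)⁻¹) : ℝ) : ℂ) * ((((p:ℝ) ^ (-(n:ℤ)) : ℝ) : ℂ) ^ s)
      = (1 - (p:ℂ)⁻¹) * ((p:ℂ) ^ (-1-s)) ^ n := by
  have hL : Complex.exp ((Real.log p : ℝ) : ℂ) = (p:ℂ) := by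
    rw [← Complex.ofReal_exp, Real.exp_log p_pos]
    simp
  set L : ℂ := ((Real.log p : ℝ) : ℂ) with hLdef
  have hlogp : Complex.log ((p:ℕ):ℂ) = L := by
    rw [hLdef, show ((p:ℕ):ℂ) = (((p:ℕ):ℝ):ℂ) from by norm_cast]
    exact (Complex.ofReal_log (le_of_lt p_pos)).symm
  have hbase : ((((p:ℝ) ^ (-(n:ℤ)) : ℝ) : ℂ) ^ s) = Complex.exp ((-(n:ℂ)) * L * s) := by
    rw [Complex.cpow_def_of_ne_zero (by
      exact_mod_cast Complex.ofReal_ne_zero.mpr (zpow_ne_zero _ (ne_of_gt p_pos)))]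
    congr 1
    rw [← Complex.ofReal_log (le_of_lt (zpow_pos p_pos _)), Real.log_zpow]
    push_cast
    rw [hlogp]
  have hz : (p:ℂ) ^ (-1-s) = Complex.exp (L * (-1-s)) := by
    rw [Complex.cpow_def_of_ne_zero (by exact_mod_cast hp.out.ne_zero), hlogp]
  have hinv : ((p:ℂ))⁻¹ ^ n = Complex.exp ((n:ℂ) * (-L)) := by
    rw [Complex.exp_nat_mul, Complex.exp_neg, hL]
  rw [hbase, hz, ← Complex.exp_nat_mul]
  push_cast
  rw [hinv]
  rw [show ((n:ℂ) * (L * (-1-s))) = ((n:ℂ) * (-L)) + (-(n:ℂ)) * L * s from by ring,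
    Complex.exp_add]
  ring

omit [MeasurableSpace ℚ_[p]] [BorelSpace ℚ_[p]] in
lemma S_pairwise_disjoint : Pairwise (Function.onFun Disjoint fun n => S p (n : ℕ)) := by
  intro i j hij
  rw [Function.onFun, Set.disjoint_left]
  intro x hxi hxj
  simp only [S, Set.mem_setOf_eq] at hxi hxj
  have heq : (p:ℝ) ^ (-(i:ℕ):ℤ) = (p:ℝ) ^ (-(j:ℕ):ℤ) := hxi.symm.trans hxj
  have h1 := (zpow_le_zpow_iff_right₀ (one_lt_p (p := p))).mp (le_of_eq heq)
  have h2 := (zpow_le_zpow_iff_right₀ (one_lt_p (p := p))).mp (ge_of_eq heq)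
  exact hij (by omega)

end PadicZetaAux

open PadicZetaAux

/-- Example 3.3 (Example-1): the local zeta integral over `ℤ_p`. -/
theorem padic_zeta_integral_Zp (p : ℕ) [Fact p.Prime]
    [MeasurableSpace ℚ_[p]] [BorelSpace ℚ_[p]]
    (μ : Measure ℚ_[p]) [μ.IsAddHaarMeasure]
    (hμ : μ {x : ℚ_[p] | ‖x‖ ≤ 1} = 1)
    (s : ℂ) (hs : -1 < s.re) :
    ∫ x in {x : ℚ_[p] | ‖x‖ ≤ 1}, (‖x‖ : ℂ) ^ s ∂μ
      = (1 - (p : ℂ)⁻¹) / (1 - (p : ℂ) ^ (-1 - s)) := by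
  have hB0 : {x : ℚ_[p] | ‖x‖ ≤ 1} = B p 0 := by
    simp [B]
  set f : ℚ_[p] → ℂ := fun x => (‖x‖ : ℂ) ^ s with hf
  have hm : ∀ n : ℕ, MeasurableSet (S p n) := fun n => measurableSet_S n
  -- a.e. equality of domain with union of spheres
  have hUsub : (⋃ n : ℕ, S p n) ⊆ B p 0 := by
    rintro x hx
    simp only [Set.mem_iUnion] at hx
    obtain ⟨n, hn⟩ := hx
    simp only [S, Set.mem_setOf_eq] at hn
    show ‖x‖ ≤ (p:ℝ) ^ (-(0:ℕ):ℤ)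
    rw [hn, zpow_le_zpow_iff_right₀ (one_lt_p (p := p))]
    omega
  have hdiffsub : B p 0 \ (⋃ n : ℕ, S p n) ⊆ ({0} : Set ℚ_[p]) := by
    rintro x ⟨hx1, hx2⟩
    simp only [Set.mem_singleton_iff]
    by_contra hx0
    apply hx2
    simp only [Set.mem_iUnion]
    refine ⟨x.valuation.toNat, ?_⟩
    simp only [S, Set.mem_setOf_eq]
    have hval : (0:ℤ) ≤ x.valuation := by
      have h1 : ‖x‖ ≤ (p:ℝ) ^ (-(0:ℕ):ℤ) := hx1
      rw [Padic.norm_eq_zpow_neg_valuation hx0, zpow_le_zpow_iff_right₀ (one_lt_p (p := p))] at h1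
      omega
    rw [Padic.norm_eq_zpow_neg_valuation hx0]
    congr 1
    omega
  have hae : (⋃ n : ℕ, S p n) =ᵐ[μ] B p 0 := by
    rw [MeasureTheory.ae_eq_set]
    constructor
    · rw [Set.diff_eq_empty.mpr hUsub]
      exact measure_empty
    · exact measure_mono_null hdiffsub (measure_singleton 0)
  -- integrability on each sphere and on the union
  have hfin : ∀ n : ℕ, μ (S p n) < ⊤ :=
    fun n => lt_top_iff_ne_top.mpr (measure_S_ne_top μ hμ n)
  have hint : ∀ n : ℕ, IntegrableOn f (S p n) μ := by
    intro n
    have hc : IntegrableOn (fun _ => ((((p:ℝ) ^ (-(n:ℤ)) : ℝ) : ℂ) ^ s)) (S p n) μ :=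
      integrableOn_const (hfin n).ne enorm_ne_top
    refine hc.congr_fun (fun x hx => ?_) (hm n)
    simp only [S, Set.mem_setOf_eq] at hx
    show (((p:ℝ) ^ (-(n:ℤ)) : ℝ) : ℂ) ^ s = (‖x‖ : ℂ) ^ s
    rw [hx]
  have hnormint : ∀ n : ℕ, ∫ x in S p n, ‖f x‖ ∂μ
      = ((p:ℝ)⁻¹ ^ n * (1 - (p:ℝ)⁻¹)) * ((p:ℝ) ^ (-(n:ℤ))) ^ s.re := by
    intro n
    rw [setIntegral_congr_fun (hm n)
      (g := fun _ => ((p:ℝ) ^ (-(n:ℤ))) ^ s.re) ?_]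
    · rw [setIntegral_const, measureReal_def, measure_S_toReal μ hμ, smul_eq_mul]
    · intro x hx
      simp only [S, Set.mem_setOf_eq] at hx
      have hxpos : (0:ℝ) < ‖x‖ := by
        rw [hx]; exact zpow_pos (p_pos (p := p)) _
      show ‖(‖x‖ : ℂ) ^ s‖ = ((p:ℝ) ^ (-(n:ℤ))) ^ s.re
      rw [Complex.norm_cpow_eq_rpow_re_of_pos hxpos, hx]
  have hsummable : Summable (fun n : ℕ => ∫ x in S p n, ‖f x‖ ∂μ) := by
    have hr0 : (0:ℝ) ≤ (p:ℝ) ^ (-(1+s.re)) := Real.rpow_nonneg (le_of_lt (p_pos (p := p))) _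
    have hr1 : (p:ℝ) ^ (-(1+s.re)) < 1 :=
      Real.rpow_lt_one_of_one_lt_of_neg (one_lt_p (p := p)) (by linarith)
    refine Summable.congr (((summable_geometric_of_lt_one hr0 hr1).mul_left
      (1 - (p:ℝ)⁻¹))) (fun n => ?_)
    rw [hnormint n]
    have e1 : ((p:ℝ) ^ (-(1+s.re))) ^ n = (p:ℝ) ^ (-(1+s.re) * (n:ℝ)) := by
      rw [Real.rpow_mul (le_of_lt (p_pos (p := p))), Real.rpow_natCast]
    have e2 : ((p:ℝ) ^ (-(n:ℤ))) ^ s.re = (p:ℝ) ^ (-(n:ℝ) * s.re) := by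
      rw [← Real.rpow_intCast (p:ℝ) (-(n:ℤ)), ← Real.rpow_mul (le_of_lt (p_pos (p := p)))]
      push_cast
      ring_nf
    have e3 : (p:ℝ)⁻¹ ^ n = (p:ℝ) ^ (-(n:ℝ)) := by
      rw [← Real.rpow_neg_one, ← Real.rpow_natCast ((p:ℝ) ^ (-1 : ℝ)) n,
        ← Real.rpow_mul (le_of_lt (p_pos (p := p)))]
      norm_num
    rw [e1, e2, e3, show -(1+s.re) * (n:ℝ) = (-(n:ℝ)) + (-(n:ℝ) * s.re) from by ring,
      Real.rpow_add (p_pos (p := p))]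
    ring
  have hfiU : IntegrableOn f (⋃ n : ℕ, S p n) μ :=
    integrableOn_iUnion_of_summable_integral_norm hint hsummable
  -- put everything together
  rw [hB0, ← setIntegral_congr_set hae,
    integral_iUnion hm (S_pairwise_disjoint (p := p)) hfiU]
  have hterm : ∀ n : ℕ, ∫ x in S p n, f x ∂μ
      = (1 - (p:ℂ)⁻¹) * ((p:ℂ) ^ (-1-s)) ^ n := by
    intro n
    rw [setIntegral_congr_fun (hm n)
      (g := fun _ => ((((p:ℝ) ^ (-(n:ℤ)) : ℝ) : ℂ) ^ s)) ?_]
    · rw [setIntegral_const, measureReal_def, measure_S_toReal μ hμ, Complex.real_smul]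
      exact term_eq s n
    · intro x hx
      simp only [S, Set.mem_setOf_eq] at hx
      show (‖x‖ : ℂ) ^ s = (((p:ℝ) ^ (-(n:ℤ)) : ℝ) : ℂ) ^ s
      rw [hx]
  rw [tsum_congr hterm, tsum_mul_left]
  have hz1 : ‖(p:ℂ) ^ (-1-s)‖ < 1 := by
    rw [show ((p:ℕ):ℂ) = (((p:ℕ):ℝ):ℂ) from by norm_cast,
      Complex.norm_cpow_eq_rpow_re_of_pos (p_pos (p := p))]
    have : (-1-s).re = -1 - s.re := by simp
    rw [this]
    exact Real.rpow_lt_one_of_one_lt_of_neg (one_lt_p (p := p)) (by linarith)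
  rw [tsum_geometric_of_norm_lt_one hz1, div_eq_mul_inv]
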